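/- Let V and W be real normed vector spaces, n ≥ 1 a natural number, and f : V → W a C^n function such that Df(v)[v] = n · f(v) for all v ∈ V. Then f is a homogeneous polynomial of degree n: f(v) = (1/n!) · Dⁿf(0)[v, …, v] for all v ∈ V, where Dⁿf(0) is the n-th iterated derivative of f at 0; in particular there exists a continuous n-multilinear map B : V × ⋯ × V → W with f(v) = B(v, …, v) for all v. -/

import Mathlib

open Real Filter

private lemma euler_iter_smul {W : Type*} [NormedAddCommGroup W] [NormedSpace ℝ W]
    (c : W) (k m : ℕ) (x : ℝ) :
    iteratedDeriv k (fun t : ℝ => t ^ m • c) x = (deriv^[k] (fun t : ℝ => t ^ m) x) • c := by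
  induction k generalizing x with
  | zero => simp
  | succ k ih =>
    rw [iteratedDeriv_succ, Function.iterate_succ_apply', funext ih]
    have h2 : DifferentiableAt ℝ (deriv^[k] fun t : ℝ => t ^ m) x := by
      rw [iter_deriv_pow']
      fun_prop
    exact deriv_smul_const h2 c

private lemma euler_iter_pow_self (n : ℕ) (x : ℝ) :
    deriv^[n] (fun t : ℝ => t ^ n) x = (n.factorial : ℝ) := by
  rw [iter_deriv_pow]
  have : (∏ i ∈ Finset.range n, ((n : ℝ) - i)) = (n.factorial : ℝ) := by
    rw [← Nat.descFactorial_self n, Nat.descFactorial_eq_prod_range]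
    push_cast
    refine Finset.prod_congr rfl fun i hi => ?_
    rw [Nat.cast_sub (Finset.mem_range.mp hi).le]
  simp [this]

/-- Example 3.4 ii): a `C^n` function satisfying `Df(v)[v] = n • f v` is a homogeneous
polynomial of degree `n`: it equals `(1/n!) • Dⁿf(0)[v, …, v]`, and in particular it is
the restriction to the diagonal of a continuous `n`-multilinear map. -/
theorem stmt_7 {V : Type*} [NormedAddCommGroup V] [NormedSpace ℝ V]
    {W : Type*} [NormedAddCommGroup W] [NormedSpace ℝ W]
    (n : ℕ) (hn : 1 ≤ n) (f : V → W) (hf : ContDiff ℝ n f)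
    (heuler : ∀ v : V, fderiv ℝ f v v = (n : ℝ) • f v) :
    (∀ v : V, f v = ((n.factorial : ℝ))⁻¹ • iteratedFDeriv ℝ n f 0 (fun _ => v)) ∧
    ∃ B : ContinuousMultilinearMap ℝ (fun _ : Fin n => V) W,
      ∀ v : V, f v = B (fun _ => v) := by
  have hdiff : Differentiable ℝ f := hf.differentiable (by exact_mod_cast Nat.one_le_iff_ne_zero.mp hn)
  -- homogeneity : f (t • v) = t ^ n • f v for t > 0
  have hom : ∀ (v : V) (t : ℝ), 0 < t → f (t • v) = t ^ n • f v := by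
    intro v t ht
    have key : ∀ s : ℝ, Real.exp (-(n : ℝ) * s) • f (Real.exp s • v) = f v := by
      have hFd : ∀ s : ℝ,
          HasDerivAt (fun s : ℝ => Real.exp (-(n : ℝ) * s) • f (Real.exp s • v)) 0 s := by
        intro s
        have h1 : HasDerivAt (fun s : ℝ => Real.exp s • v) (Real.exp s • v) s :=
          (Real.hasDerivAt_exp s).smul_const v
        have h2 : HasDerivAt (fun s : ℝ => f (Real.exp s • v))
            (fderiv ℝ f (Real.exp s • v) (Real.exp s • v)) s :=
          (hdiff _).hasFDerivAt.comp_hasDerivAt s h1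
        have h3 : HasDerivAt (fun s : ℝ => Real.exp (-(n : ℝ) * s))
            (Real.exp (-(n : ℝ) * s) * (-(n : ℝ) * 1)) s :=
          ((hasDerivAt_id s).const_mul (-(n : ℝ))).exp
        have h4 := h3.smul h2
        convert h4 using 1
        · rfl
        rw [heuler, smul_smul, ← add_smul]
        have hz : Real.exp (-(n : ℝ) * s) * (n : ℝ)
            + Real.exp (-(n : ℝ) * s) * (-(n : ℝ) * 1) = 0 := by ring
        rw [hz, zero_smul]
      intro s
      have := is_const_of_deriv_eq_zero
        (fun x => ((hFd x).differentiableAt : DifferentiableAt ℝ _ x))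
        (fun x => (hFd x).deriv) s 0
      simpa using this
    have := key (Real.log t)
    rw [Real.exp_log ht] at this
    have hexp : Real.exp (-(n : ℝ) * Real.log t) = (t ^ n)⁻¹ := by
      rw [neg_mul, Real.exp_neg, ← Real.exp_log ht, ← Real.exp_nat_mul, Real.exp_log ht]
    rw [hexp] at this
    have htn : (t : ℝ) ^ n ≠ 0 := pow_ne_zero _ ht.ne'
    calc f (t • v) = (t ^ n) • ((t ^ n)⁻¹ • f (t • v)) := by
          rw [smul_smul, mul_inv_cancel₀ htn, one_smul]
      _ = t ^ n • f v := by rw [this]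
  -- the first claim
  have main : ∀ v : V, (n.factorial : ℝ) • f v = iteratedFDeriv ℝ n f 0 (fun _ => v) := by
    intro v
    set L : ℝ →L[ℝ] V := (ContinuousLinearMap.id ℝ ℝ).smulRight v with hL
    have hLapp : ∀ t : ℝ, L t = t • v := fun t => rfl
    set g : ℝ → W := f ∘ L with hg
    have hgC : ContDiff ℝ n g := hf.comp L.contDiff
    -- at positive t, the n-th derivative of g equals n! • f v
    have hpos : ∀ t : ℝ, 0 < t → iteratedDeriv n g t = (n.factorial : ℝ) • f v := by
      intro t ht
      have hev : g =ᶠ[nhds t] fun s : ℝ => s ^ n • f v := by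
        filter_upwards [IsOpen.mem_nhds isOpen_Ioi ht] with s hs
        simpa [hg, Function.comp, hLapp] using hom v s hs
      have heq : iteratedFDeriv ℝ n g t
          = iteratedFDeriv ℝ n (fun s : ℝ => s ^ n • f v) t := by
        rw [← iteratedFDerivWithin_univ, ← iteratedFDerivWithin_univ]
        exact (hev.filter_mono nhdsWithin_le_nhds).iteratedFDerivWithin_eq
          hev.self_of_nhds n
      rw [iteratedDeriv_eq_iteratedFDeriv, heq, ← iteratedDeriv_eq_iteratedFDeriv,
        euler_iter_smul, euler_iter_pow_self]
    -- continuity of the n-th derivative gives the value at 0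
    have hcont : Continuous (iteratedDeriv n g) := by
      rw [iteratedDeriv_eq_equiv_comp]
      exact (LinearIsometryEquiv.continuous _).comp
        (hgC.continuous_iteratedFDeriv le_rfl)
    have h0 : iteratedDeriv n g 0 = (n.factorial : ℝ) • f v := by
      have t1 : Tendsto (iteratedDeriv n g) (nhdsWithin 0 (Set.Ioi 0))
          (nhds (iteratedDeriv n g 0)) :=
        (hcont.continuousAt).mono_left nhdsWithin_le_nhds
      have t2 : Tendsto (iteratedDeriv n g) (nhdsWithin 0 (Set.Ioi 0))
          (nhds ((n.factorial : ℝ) • f v)) := by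
        refine Tendsto.congr' ?_ tendsto_const_nhds
        filter_upwards [self_mem_nhdsWithin] with t ht
        exact (hpos t ht).symm
      exact tendsto_nhds_unique t1 t2
    -- relate to iteratedFDeriv of f at 0
    have hcomp : iteratedDeriv n g 0 = iteratedFDeriv ℝ n f 0 (fun _ => v) := by
      rw [iteratedDeriv_eq_iteratedFDeriv,
        L.iteratedFDeriv_comp_right hf 0 le_rfl]
      simp [ContinuousMultilinearMap.compContinuousLinearMap_apply, hLapp]
    rw [← h0, hcomp]
  have hfac : (n.factorial : ℝ) ≠ 0 := Nat.cast_ne_zero.mpr n.factorial_ne_zero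
  constructor
  · intro v
    rw [← main v, smul_smul, inv_mul_cancel₀ hfac, one_smul]
  · refine ⟨(n.factorial : ℝ)⁻¹ • iteratedFDeriv ℝ n f 0, fun v => ?_⟩
    rw [ContinuousMultilinearMap.smul_apply, ← main v, smul_smul,
      inv_mul_cancel₀ hfac, one_smul]
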